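/- Let (A, ⊗, 1) be an abelian category with an exact symmetric monoidal structure. Then the full subcategory A_rig of dualizable objects is closed under kernels and cokernels, hence is an abelian subcategory of A. -/

import Mathlib

open CategoryTheory CategoryTheory.Limits CategoryTheory.MonoidalCategory

namespace Stmt1Aux

variable {C : Type*} [Category C] [Abelian C]
  [MonoidalCategory C] [SymmetricCategory C]
  [∀ X : C, PreservesFiniteLimits (tensorLeft X)]
  [∀ X : C, PreservesFiniteColimits (tensorLeft X)]

/-- In a braided category, `tensorLeft X` is naturally isomorphic to `tensorRight X`. -/
noncomputable def tensorLeftIsoTensorRight (X : C) : tensorLeft X ≅ tensorRight X :=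
  NatIso.ofComponents (fun Y => β_ X Y) (by
    intros Y Z f
    simp [BraidedCategory.braiding_naturality_right])

instance tensorRight_pfl (X : C) : PreservesFiniteLimits (tensorRight X) :=
  preservesFiniteLimits_of_natIso (tensorLeftIsoTensorRight X)

instance tensorRight_pfc (X : C) : PreservesFiniteColimits (tensorRight X) :=
  preservesFiniteColimits_of_natIso (tensorLeftIsoTensorRight X)

lemma whiskerLeft_zero' (W : C) {A B : C} : W ◁ (0 : A ⟶ B) = 0 :=
  (tensorLeft W).map_zero A B

lemma zero_whiskerRight' (W : C) {A B : C} : (0 : A ⟶ B) ▷ W = 0 :=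
  (tensorRight W).map_zero A B

lemma presKernel_inv_comp_map (G : C ⥤ C) {A B : C} (g : A ⟶ B)
    [PreservesLimit (parallelPair g 0) G] [G.PreservesZeroMorphisms] :
    (PreservesKernel.iso G g).inv ≫ G.map (kernel.ι g) = kernel.ι (G.map g) := by
  rw [Iso.inv_comp_eq, ← kernelComparison_comp_ι g G, PreservesKernel.iso_hom]

lemma map_comp_presCokernel_hom (G : C ⥤ C) {A B : C} (g : A ⟶ B)
    [PreservesColimit (parallelPair g 0) G] [G.PreservesZeroMorphisms] :
    G.map (cokernel.π g) ≫ (PreservesCokernel.iso G g).hom = cokernel.π (G.map g) := by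
  have h := π_comp_cokernelComparison g G
  rw [← PreservesCokernel.iso_inv] at h
  rw [← h, Category.assoc, Iso.inv_hom_id, Category.comp_id]

variable {X Y : C} (f : X ⟶ Y) [HasRightDual X] [HasRightDual Y]

/-! ### The pairing between `kernel f` and `cokernel fᘁ` -/

lemma coevK_aux :
    (η_ X (Xᘁ) ≫ X ◁ cokernel.π (fᘁ)) ≫ (tensorRight (cokernel (fᘁ))).map f = 0 := by
  simp only [Functor.flip_obj_obj, Functor.flip_obj_map, curriedTensor_obj_obj, curriedTensor_map_app, Category.assoc]
  rw [whisker_exchange, ← coevaluation_comp_rightAdjointMate_assoc f,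
    ← MonoidalCategory.whiskerLeft_comp, cokernel.condition, whiskerLeft_zero', comp_zero]

/-- Coevaluation for the pairing `(kernel f, cokernel fᘁ)`. -/
noncomputable def coevK : 𝟙_ C ⟶ kernel f ⊗ cokernel (fᘁ) :=
  kernel.lift ((tensorRight (cokernel (fᘁ))).map f)
      (η_ X (Xᘁ) ≫ X ◁ cokernel.π (fᘁ)) (coevK_aux f) ≫
    (PreservesKernel.iso (tensorRight (cokernel (fᘁ))) f).inv

lemma coevK_fac :
    coevK f ≫ kernel.ι f ▷ cokernel (fᘁ) = η_ X (Xᘁ) ≫ X ◁ cokernel.π (fᘁ) := by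
  have h : kernel.ι f ▷ cokernel (fᘁ) = (tensorRight (cokernel (fᘁ))).map (kernel.ι f) := rfl
  rw [coevK, h, Category.assoc, presKernel_inv_comp_map, kernel.lift_ι]

lemma evK_aux :
    (tensorRight (kernel f)).map (fᘁ) ≫ ((Xᘁ) ◁ kernel.ι f ≫ ε_ X (Xᘁ)) = 0 := by
  simp only [Functor.flip_obj_obj, Functor.flip_obj_map, curriedTensor_obj_obj, curriedTensor_map_app]
  rw [← whisker_exchange_assoc, rightAdjointMate_comp_evaluation,
    ← MonoidalCategory.whiskerLeft_comp_assoc, kernel.condition, whiskerLeft_zero', zero_comp]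

/-- Evaluation for the pairing `(kernel f, cokernel fᘁ)`. -/
noncomputable def evK : cokernel (fᘁ) ⊗ kernel f ⟶ 𝟙_ C :=
  (PreservesCokernel.iso (tensorRight (kernel f)) (fᘁ)).hom ≫
    cokernel.desc ((tensorRight (kernel f)).map (fᘁ))
      ((Xᘁ) ◁ kernel.ι f ≫ ε_ X (Xᘁ)) (evK_aux f)

lemma evK_fac :
    cokernel.π (fᘁ) ▷ kernel f ≫ evK f = (Xᘁ) ◁ kernel.ι f ≫ ε_ X (Xᘁ) := by
  have h : cokernel.π (fᘁ) ▷ kernel f = (tensorRight (kernel f)).map (cokernel.π (fᘁ)) := rfl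
  rw [evK, h, ← Category.assoc, map_comp_presCokernel_hom, cokernel.π_desc]

/-- The kernel of a map between dualizable objects is dualizable. -/
noncomputable def pairingKernel : ExactPairing (kernel f) (cokernel (fᘁ)) where
  coevaluation' := coevK f
  evaluation' := evK f
  coevaluation_evaluation' := by
    have hπ : cokernel.π (fᘁ) ▷ (𝟙_ C) =
        (ρ_ (Xᘁ)).hom ≫ cokernel.π (fᘁ) ≫ (ρ_ (cokernel (fᘁ))).inv := by
      rw [← rightUnitor_naturality]; simp
    have : Epi (cokernel.π (fᘁ) ▷ (𝟙_ C)) := by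
      rw [hπ]; infer_instance
    rw [← cancel_epi (cokernel.π (fᘁ) ▷ (𝟙_ C))]
    rw [← whisker_exchange_assoc, associator_inv_naturality_left_assoc,
      ← comp_whiskerRight, evK_fac, comp_whiskerRight,
      ← associator_inv_naturality_middle_assoc,
      ← MonoidalCategory.whiskerLeft_comp_assoc, coevK_fac,
      MonoidalCategory.whiskerLeft_comp_assoc,
      associator_inv_naturality_right_assoc, whisker_exchange,
      ExactPairing.coevaluation_evaluation_assoc]
    rw [hπ]
    simp
  evaluation_coevaluation' := by
    have hι : kernel.ι f ▷ (𝟙_ C) =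
        (ρ_ (kernel f)).hom ≫ kernel.ι f ≫ (ρ_ X).inv := by
      rw [← rightUnitor_naturality]; simp
    have : Mono (kernel.ι f ▷ (𝟙_ C)) := by
      rw [hι]; exact mono_comp _ _
    rw [← cancel_mono (kernel.ι f ▷ (𝟙_ C))]
    rw [Category.assoc, Category.assoc, whisker_exchange,
      ← associator_naturality_left_assoc,
      ← comp_whiskerRight_assoc, coevK_fac, comp_whiskerRight_assoc,
      associator_naturality_middle_assoc,
      ← MonoidalCategory.whiskerLeft_comp, evK_fac,
      MonoidalCategory.whiskerLeft_comp,
      ← associator_naturality_right_assoc,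
      ← whisker_exchange_assoc,
      ExactPairing.evaluation_coevaluation]
    rw [hι]
    simp
  
/-! ### The pairing between `cokernel f` and `kernel fᘁ` -/

lemma coevQ_aux :
    (η_ Y (Yᘁ) ≫ cokernel.π f ▷ (Yᘁ)) ≫ (tensorLeft (cokernel f)).map (fᘁ) = 0 := by
  simp only [curriedTensor_obj_obj, curriedTensor_obj_map, Category.assoc]
  rw [← whisker_exchange, coevaluation_comp_rightAdjointMate_assoc f,
    ← comp_whiskerRight, cokernel.condition, zero_whiskerRight', comp_zero]

/-- Coevaluation for the pairing `(cokernel f, kernel fᘁ)`. -/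
noncomputable def coevQ : 𝟙_ C ⟶ cokernel f ⊗ kernel (fᘁ) :=
  kernel.lift ((tensorLeft (cokernel f)).map (fᘁ))
      (η_ Y (Yᘁ) ≫ cokernel.π f ▷ (Yᘁ)) (coevQ_aux f) ≫
    (PreservesKernel.iso (tensorLeft (cokernel f)) (fᘁ)).inv

lemma coevQ_fac :
    coevQ f ≫ cokernel f ◁ kernel.ι (fᘁ) = η_ Y (Yᘁ) ≫ cokernel.π f ▷ (Yᘁ) := by
  have h : cokernel f ◁ kernel.ι (fᘁ) = (tensorLeft (cokernel f)).map (kernel.ι (fᘁ)) := rfl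
  rw [coevQ, h, Category.assoc, presKernel_inv_comp_map, kernel.lift_ι]

lemma evQ_aux :
    (tensorLeft (kernel (fᘁ))).map f ≫ (kernel.ι (fᘁ) ▷ Y ≫ ε_ Y (Yᘁ)) = 0 := by
  simp only [curriedTensor_obj_obj, curriedTensor_obj_map]
  rw [whisker_exchange_assoc, ← rightAdjointMate_comp_evaluation,
    ← comp_whiskerRight_assoc, kernel.condition, zero_whiskerRight', zero_comp]

/-- Evaluation for the pairing `(cokernel f, kernel fᘁ)`. -/
noncomputable def evQ : kernel (fᘁ) ⊗ cokernel f ⟶ 𝟙_ C :=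
  (PreservesCokernel.iso (tensorLeft (kernel (fᘁ))) f).hom ≫
    cokernel.desc ((tensorLeft (kernel (fᘁ))).map f)
      (kernel.ι (fᘁ) ▷ Y ≫ ε_ Y (Yᘁ)) (evQ_aux f)

lemma evQ_fac :
    kernel (fᘁ) ◁ cokernel.π f ≫ evQ f = kernel.ι (fᘁ) ▷ Y ≫ ε_ Y (Yᘁ) := by
  have h : kernel (fᘁ) ◁ cokernel.π f = (tensorLeft (kernel (fᘁ))).map (cokernel.π f) := rfl
  rw [evQ, h, ← Category.assoc, map_comp_presCokernel_hom, cokernel.π_desc]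

/-- The cokernel of a map between dualizable objects is dualizable. -/
noncomputable def pairingCokernel : ExactPairing (cokernel f) (kernel (fᘁ)) where
  coevaluation' := coevQ f
  evaluation' := evQ f
  coevaluation_evaluation' := by
    have hι : (𝟙_ C) ◁ kernel.ι (fᘁ) =
        (λ_ (kernel (fᘁ))).hom ≫ kernel.ι (fᘁ) ≫ (λ_ (Yᘁ)).inv := by
      rw [← leftUnitor_naturality]; simp
    have : Mono ((𝟙_ C) ◁ kernel.ι (fᘁ)) := by
      rw [hι]; exact mono_comp _ _
    rw [← cancel_mono ((𝟙_ C) ◁ kernel.ι (fᘁ))]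
    rw [Category.assoc, Category.assoc, ← whisker_exchange,
      ← associator_inv_naturality_right_assoc,
      ← MonoidalCategory.whiskerLeft_comp_assoc, coevQ_fac,
      MonoidalCategory.whiskerLeft_comp_assoc,
      associator_inv_naturality_middle_assoc,
      ← comp_whiskerRight, evQ_fac, comp_whiskerRight,
      ← associator_inv_naturality_left_assoc,
      whisker_exchange_assoc,
      ExactPairing.coevaluation_evaluation]
    rw [hι]
    simp
  evaluation_coevaluation' := by
    have hπ : (𝟙_ C) ◁ cokernel.π f =
        (λ_ Y).hom ≫ cokernel.π f ≫ (λ_ (cokernel f)).inv := by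
      rw [← leftUnitor_naturality]; simp
    have : Epi ((𝟙_ C) ◁ cokernel.π f) := by
      rw [hπ]; infer_instance
    rw [← cancel_epi ((𝟙_ C) ◁ cokernel.π f)]
    rw [whisker_exchange_assoc, associator_naturality_right_assoc,
      ← MonoidalCategory.whiskerLeft_comp, evQ_fac,
      MonoidalCategory.whiskerLeft_comp,
      ← associator_naturality_middle_assoc,
      ← comp_whiskerRight_assoc, coevQ_fac, comp_whiskerRight_assoc,
      associator_naturality_left_assoc, ← whisker_exchange,
      ExactPairing.evaluation_coevaluation_assoc]
    rw [hπ]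
    simp

end Stmt1Aux

/-- In an abelian ℚ-linear category with exact symmetric monoidal structure,
the full subcategory of dualizable objects is closed under kernels and cokernels. -/
theorem stmt1 (C : Type*) [Category C] [Abelian C] [Linear ℚ C]
    [MonoidalCategory C] [SymmetricCategory C]
    [∀ X : C, PreservesFiniteLimits (tensorLeft X)]
    [∀ X : C, PreservesFiniteColimits (tensorLeft X)]
    {X Y : C} (f : X ⟶ Y) [HasRightDual X] [HasRightDual Y]
    [HasLeftDual X] [HasLeftDual Y] :
    (Nonempty (HasRightDual (kernel f)) ∧ Nonempty (HasLeftDual (kernel f))) ∧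
    (Nonempty (HasRightDual (cokernel f)) ∧ Nonempty (HasLeftDual (cokernel f))) := by
  haveI p1 : ExactPairing (kernel f) (cokernel (fᘁ)) := Stmt1Aux.pairingKernel f
  haveI p2 : ExactPairing (cokernel f) (kernel (fᘁ)) := Stmt1Aux.pairingCokernel f
  haveI hk : HasRightDual (kernel f) := ⟨cokernel (fᘁ)⟩
  haveI hq : HasRightDual (cokernel f) := ⟨kernel (fᘁ)⟩
  exact ⟨⟨⟨hk⟩, ⟨BraidedCategory.hasLeftDualOfHasRightDual⟩⟩,
    ⟨⟨hq⟩, ⟨BraidedCategory.hasLeftDualOfHasRightDual⟩⟩⟩
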